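/- arXiv:2101.05773 — 4 statements merged into one kernel-verified Lean document; each statement's English description precedes it below -/
import Mathlib

section
/- The Motzkin polynomial x₀⁶ + x₁⁴x₂² + x₁²x₂⁴ − 3x₀²x₁²x₂² cannot be written as a sum of squares of polynomials in ℝ[x₀, x₁, x₂]. -/
set_option maxHeartbeats 1000000
open MvPolynomial Finsupp

noncomputable def E (a b c : ℕ) : Fin 3 →₀ ℕ :=
  Finsupp.single 0 a + Finsupp.single 1 b + Finsupp.single 2 c

lemma E_apply (a b c : ℕ) (j : Fin 3) :
    E a b c j = ![a,b,c] j := by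
  fin_cases j <;> simp [E]

lemma eq_E (m : Fin 3 →₀ ℕ) : m = E (m 0) (m 1) (m 2) := by
  ext j; fin_cases j <;> simp [E_apply]

lemma E_inj {a b c a' b' c' : ℕ} : E a b c = E a' b' c' ↔ a = a' ∧ b = b' ∧ c = c' := by
  constructor
  · intro h
    exact ⟨by simpa [E_apply] using DFunLike.congr_fun h 0,
      by simpa [E_apply] using DFunLike.congr_fun h 1,
      by simpa [E_apply] using DFunLike.congr_fun h 2⟩
  · rintro ⟨rfl, rfl, rfl⟩; rfl

lemma degree_E (a b c : ℕ) : (E a b c).degree = a + b + c := by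
  rw [Finsupp.degree_apply]
  rw [Finset.sum_subset (Finset.subset_univ _)]
  · rw [Fin.sum_univ_three]; simp [E_apply]
  · intro x _ hx; simpa using hx

lemma E_add (a b c a' b' c' : ℕ) : E a b c + E a' b' c' = E (a+a') (b+b') (c+c') := by
  ext j; fin_cases j <;> simp [E_apply]

example : E 2 1 0 ≠ E 0 1 2 := by simp [E_inj]

-- monomial representation
lemma X_pow_mul (a b c : ℕ) :
    (X 0:MvPolynomial (Fin 3) ℝ)^a * (X 1)^b * (X 2)^c = monomial (E a b c) 1 := by
  rw [E, X_pow_eq_monomial, X_pow_eq_monomial, X_pow_eq_monomial, monomial_mul, monomial_mul]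
  simp

lemma deg3 (m : Fin 3 →₀ ℕ) : m.degree = m 0 + m 1 + m 2 := by
  rw [Finsupp.degree_apply, Finset.sum_subset (Finset.subset_univ _)]
  · rw [Fin.sum_univ_three]
  · intro x _ hx; simpa using hx

lemma coeff_big_eq_zero {p : MvPolynomial (Fin 3) ℝ} (hp : p.totalDegree ≤ 3)
    {m : Fin 3 →₀ ℕ} (hm : 3 < m.degree) : coeff m p = 0 :=
  coeff_eq_zero_of_totalDegree_lt (lt_of_le_of_lt hp hm)

lemma coeff_sq_expand (p : MvPolynomial (Fin 3) ℝ) (hp : p.totalDegree ≤ 3)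
    {α : Fin 3 →₀ ℕ} (hα : α.degree = 6)
    (S : Finset ((Fin 3 →₀ ℕ) × (Fin 3 →₀ ℕ)))
    (hsub : S ⊆ Finset.HasAntidiagonal.antidiagonal α)
    (hfull : ∀ β γ : Fin 3 →₀ ℕ, β + γ = α → β.degree = 3 → (β, γ) ∈ S) :
    coeff α (p*p) = ∑ x ∈ S, coeff x.1 p * coeff x.2 p := by
  rw [coeff_mul]
  refine (Finset.sum_subset hsub ?_).symm
  intro x hx hxS
  rw [Finset.HasAntidiagonal.mem_antidiagonal] at hx
  have hdadd : x.1.degree + x.2.degree = 6 := by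
    have := congrArg Finsupp.degree hx
    rw [hα] at this
    rw [← this, deg3, deg3, deg3]
    simp
    ring
  rcases lt_trichotomy x.1.degree 3 with h|h|h
  · exact mul_eq_zero_of_right _ (coeff_big_eq_zero hp (by omega))
  · exact absurd (hfull x.1 x.2 hx h) hxS
  · exact mul_eq_zero_of_left (coeff_big_eq_zero hp h) _

lemma eq_E_of (m : Fin 3 →₀ ℕ) (a b c : ℕ) (h0 : m 0 = a) (h1 : m 1 = b) (h2 : m 2 = c) :
    m = E a b c := by rw [eq_E m, h0, h1, h2]

noncomputable def F : ((ℕ×ℕ×ℕ)×(ℕ×ℕ×ℕ)) → (Fin 3 →₀ ℕ) × (Fin 3 →₀ ℕ) :=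
  fun t => (E t.1.1 t.1.2.1 t.1.2.2, E t.2.1 t.2.2.1 t.2.2.2)

lemma F_inj : Function.Injective F := by
  rintro ⟨⟨a,b,c⟩,⟨d,e,f⟩⟩ ⟨⟨a',b',c'⟩,⟨d',e',f'⟩⟩ h
  rw [F, F, Prod.ext_iff] at h
  simp only [E_inj] at h
  obtain ⟨⟨h1,h2,h3⟩,⟨h4,h5,h6⟩⟩ := h
  subst h1; subst h2; subst h3; subst h4; subst h5; subst h6; rfl

lemma coeff_sq_expandT (p : MvPolynomial (Fin 3) ℝ) (hp : p.totalDegree ≤ 3)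
    (A B C : ℕ) (hABC : A + B + C = 6)
    (T : Finset ((ℕ×ℕ×ℕ)×(ℕ×ℕ×ℕ)))
    (hT1 : ∀ t ∈ T, t.1.1 + t.2.1 = A ∧ t.1.2.1 + t.2.2.1 = B ∧ t.1.2.2 + t.2.2.2 = C)
    (hT2 : ∀ a b c : ℕ, a + b + c = 3 → a ≤ A → b ≤ B → c ≤ C →
      ((a,b,c),(A-a,B-b,C-c)) ∈ T) :
    coeff (E A B C) (p*p) =
      ∑ t ∈ T, coeff (E t.1.1 t.1.2.1 t.1.2.2) p * coeff (E t.2.1 t.2.2.1 t.2.2.2) p := by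
  have h1 : coeff (E A B C) (p*p) = ∑ x ∈ T.image F, coeff x.1 p * coeff x.2 p := by
    apply coeff_sq_expand p hp (by rw [degree_E]; omega)
    · intro x hx
      rw [Finset.mem_image] at hx
      obtain ⟨t, ht, rfl⟩ := hx
      obtain ⟨e1, e2, e3⟩ := hT1 t ht
      rw [Finset.HasAntidiagonal.mem_antidiagonal]
      show E _ _ _ + E _ _ _ = E A B C
      rw [E_add, e1, e2, e3]
    · intro β γ hadd hdeg
      have h0 : β 0 + γ 0 = A := by
        have := DFunLike.congr_fun hadd 0; simpa [E_apply] using this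
      have h1 : β 1 + γ 1 = B := by
        have := DFunLike.congr_fun hadd 1; simpa [E_apply] using this
      have h2 : β 2 + γ 2 = C := by
        have := DFunLike.congr_fun hadd 2; simpa [E_apply] using this
      rw [deg3] at hdeg
      have hmem := hT2 (β 0) (β 1) (β 2) hdeg (by omega) (by omega) (by omega)
      have : F ((β 0, β 1, β 2), (A - β 0, B - β 1, C - β 2)) = (β, γ) := by
        show (E (β 0) (β 1) (β 2), E (A - β 0) (B - β 1) (C - β 2)) = (β, γ)
        rw [Prod.ext_iff]
        exact ⟨(eq_E_of β _ _ _ rfl rfl rfl).symm,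
          (eq_E_of γ _ _ _ (by omega) (by omega) (by omega)).symm⟩
      rw [← this]
      exact Finset.mem_image_of_mem F hmem
  rw [h1, Finset.sum_image (fun a _ b _ h => F_inj h)]
  rfl

lemma coeff_sq_060 (p : MvPolynomial (Fin 3) ℝ) (hp : p.totalDegree ≤ 3) :
    coeff (E 0 6 0) (p*p) = (coeff (E 0 3 0) p)^2 := by
  rw [coeff_sq_expandT p hp 0 6 0 rfl
    {((0,3,0),(0,3,0))}
    (by decide)
    (by intro a b c h ha hb hc
        interval_cases a <;> interval_cases b <;> interval_cases c <;>
          first | decide | omega)]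
  rw [Finset.sum_singleton]
  ring

lemma coeff_sq_240 (p : MvPolynomial (Fin 3) ℝ) (hp : p.totalDegree ≤ 3) :
    coeff (E 2 4 0) (p*p) = 2 * (coeff (E 2 1 0) p * coeff (E 0 3 0) p) + (coeff (E 1 2 0) p)^2 := by
  rw [coeff_sq_expandT p hp 2 4 0 rfl
    {((2,1,0),(0,3,0)), ((1,2,0),(1,2,0)), ((0,3,0),(2,1,0))}
    (by decide)
    (by intro a b c h ha hb hc
        interval_cases a <;> interval_cases b <;> interval_cases c <;>
          first | decide | omega)]
  rw [Finset.sum_insert (by decide),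
      Finset.sum_insert (by decide),
      Finset.sum_singleton]
  ring

lemma coeff_sq_420 (p : MvPolynomial (Fin 3) ℝ) (hp : p.totalDegree ≤ 3) :
    coeff (E 4 2 0) (p*p) = 2 * (coeff (E 3 0 0) p * coeff (E 1 2 0) p) + (coeff (E 2 1 0) p)^2 := by
  rw [coeff_sq_expandT p hp 4 2 0 rfl
    {((3,0,0),(1,2,0)), ((2,1,0),(2,1,0)), ((1,2,0),(3,0,0))}
    (by decide)
    (by intro a b c h ha hb hc
        interval_cases a <;> interval_cases b <;> interval_cases c <;>
          first | decide | omega)]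
  rw [Finset.sum_insert (by decide),
      Finset.sum_insert (by decide),
      Finset.sum_singleton]
  ring

lemma coeff_sq_006 (p : MvPolynomial (Fin 3) ℝ) (hp : p.totalDegree ≤ 3) :
    coeff (E 0 0 6) (p*p) = (coeff (E 0 0 3) p)^2 := by
  rw [coeff_sq_expandT p hp 0 0 6 rfl
    {((0,0,3),(0,0,3))}
    (by decide)
    (by intro a b c h ha hb hc
        interval_cases a <;> interval_cases b <;> interval_cases c <;>
          first | decide | omega)]
  rw [Finset.sum_singleton]
  ring

lemma coeff_sq_204 (p : MvPolynomial (Fin 3) ℝ) (hp : p.totalDegree ≤ 3) :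
    coeff (E 2 0 4) (p*p) = 2 * (coeff (E 2 0 1) p * coeff (E 0 0 3) p) + (coeff (E 1 0 2) p)^2 := by
  rw [coeff_sq_expandT p hp 2 0 4 rfl
    {((2,0,1),(0,0,3)), ((1,0,2),(1,0,2)), ((0,0,3),(2,0,1))}
    (by decide)
    (by intro a b c h ha hb hc
        interval_cases a <;> interval_cases b <;> interval_cases c <;>
          first | decide | omega)]
  rw [Finset.sum_insert (by decide),
      Finset.sum_insert (by decide),
      Finset.sum_singleton]
  ring

lemma coeff_sq_402 (p : MvPolynomial (Fin 3) ℝ) (hp : p.totalDegree ≤ 3) :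
    coeff (E 4 0 2) (p*p) = 2 * (coeff (E 3 0 0) p * coeff (E 1 0 2) p) + (coeff (E 2 0 1) p)^2 := by
  rw [coeff_sq_expandT p hp 4 0 2 rfl
    {((3,0,0),(1,0,2)), ((2,0,1),(2,0,1)), ((1,0,2),(3,0,0))}
    (by decide)
    (by intro a b c h ha hb hc
        interval_cases a <;> interval_cases b <;> interval_cases c <;>
          first | decide | omega)]
  rw [Finset.sum_insert (by decide),
      Finset.sum_insert (by decide),
      Finset.sum_singleton]
  ring

lemma coeff_sq_222 (p : MvPolynomial (Fin 3) ℝ) (hp : p.totalDegree ≤ 3) :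
    coeff (E 2 2 2) (p*p) = 2 * (coeff (E 2 1 0) p * coeff (E 0 1 2) p + coeff (E 2 0 1) p * coeff (E 0 2 1) p + coeff (E 1 2 0) p * coeff (E 1 0 2) p) + (coeff (E 1 1 1) p)^2 := by
  rw [coeff_sq_expandT p hp 2 2 2 rfl
    {((2,1,0),(0,1,2)), ((2,0,1),(0,2,1)), ((1,2,0),(1,0,2)), ((1,1,1),(1,1,1)), ((1,0,2),(1,2,0)), ((0,2,1),(2,0,1)), ((0,1,2),(2,1,0))}
    (by decide)
    (by intro a b c h ha hb hc
        interval_cases a <;> interval_cases b <;> interval_cases c <;>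
          first | decide | omega)]
  rw [Finset.sum_insert (by decide),
      Finset.sum_insert (by decide),
      Finset.sum_insert (by decide),
      Finset.sum_insert (by decide),
      Finset.sum_insert (by decide),
      Finset.sum_insert (by decide),
      Finset.sum_singleton]
  ring

noncomputable abbrev Mz : MvPolynomial (Fin 3) ℝ :=
  (X 0)^6 + (X 1)^4*(X 2)^2 + (X 1)^2*(X 2)^4 - 3*(X 0)^2*(X 1)^2*(X 2)^2

lemma Mz_eq : Mz = monomial (E 6 0 0) 1 + monomial (E 0 4 2) 1 + monomial (E 0 2 4) 1
    - monomial (E 2 2 2) 3 := by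
  have h1 : ((X 0)^6 : MvPolynomial (Fin 3) ℝ) = monomial (E 6 0 0) 1 := by
    simpa using X_pow_mul 6 0 0
  have h2 : ((X 1)^4*(X 2)^2 : MvPolynomial (Fin 3) ℝ) = monomial (E 0 4 2) 1 := by
    simpa using X_pow_mul 0 4 2
  have h3 : ((X 1)^2*(X 2)^4 : MvPolynomial (Fin 3) ℝ) = monomial (E 0 2 4) 1 := by
    simpa using X_pow_mul 0 2 4
  have h4 : (3*(X 0)^2*(X 1)^2*(X 2)^2 : MvPolynomial (Fin 3) ℝ) = monomial (E 2 2 2) 3 := by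
    rw [mul_assoc, mul_assoc, ← mul_assoc ((X 0)^2), X_pow_mul 2 2 2,
      show (3 : MvPolynomial (Fin 3) ℝ) = C 3 from (map_ofNat C 3).symm, C_mul_monomial]
    norm_num
  rw [Mz, h1, h2, h3, h4]

lemma cMz_060 : coeff (E 0 6 0) Mz = 0 := by rw [Mz_eq]; simp [coeff_monomial, E_inj]
lemma cMz_240 : coeff (E 2 4 0) Mz = 0 := by rw [Mz_eq]; simp [coeff_monomial, E_inj]
lemma cMz_420 : coeff (E 4 2 0) Mz = 0 := by rw [Mz_eq]; simp [coeff_monomial, E_inj]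
lemma cMz_006 : coeff (E 0 0 6) Mz = 0 := by rw [Mz_eq]; simp [coeff_monomial, E_inj]
lemma cMz_204 : coeff (E 2 0 4) Mz = 0 := by rw [Mz_eq]; simp [coeff_monomial, E_inj]
lemma cMz_402 : coeff (E 4 0 2) Mz = 0 := by rw [Mz_eq]; simp [coeff_monomial, E_inj]
lemma cMz_222 : coeff (E 2 2 2) Mz = -3 := by rw [Mz_eq]; simp [coeff_monomial, E_inj]
lemma cMz_600 : coeff (E 6 0 0) Mz = 1 := by rw [Mz_eq]; simp [coeff_monomial, E_inj]

lemma totalDegree_Mz : Mz.totalDegree ≤ 6 := by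
  have key : ∀ (a b c : ℕ) (r : ℝ), a + b + c ≤ 6 →
      (monomial (E a b c) r).totalDegree ≤ 6 := by
    intro a b c r habc
    refine le_trans (totalDegree_monomial_le _ _) ?_
    show (E a b c).degree ≤ 6
    rw [degree_E]; omega
  rw [Mz_eq]
  refine le_trans (totalDegree_sub _ _) (max_le (le_trans (totalDegree_add _ _)
    (max_le (le_trans (totalDegree_add _ _) (max_le ?_ ?_)) ?_)) ?_) <;>
    exact key _ _ _ _ (by norm_num)

lemma sos_zero {n : ℕ} (p : Fin n → MvPolynomial (Fin 3) ℝ)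
    (h : ∑ i, (p i) * (p i) = 0) : ∀ i, p i = 0 := by
  intro i
  have key : ∀ x : Fin 3 → ℝ, eval x (p i) = eval x 0 := by
    intro x
    have h2 := congrArg (eval x) h
    rw [map_sum, map_zero] at h2
    simp only [map_mul] at h2
    have h3 : ∀ j ∈ Finset.univ, (0:ℝ) ≤ eval x (p j) * eval x (p j) :=
      fun j _ => mul_self_nonneg _
    have h4 := (Finset.sum_eq_zero_iff_of_nonneg h3).mp h2 i (Finset.mem_univ i)
    rw [map_zero]
    exact mul_self_eq_zero.mp h4
  exact MvPolynomial.funext key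

lemma deg_le {r : ℕ} (h : Fin r → MvPolynomial (Fin 3) ℝ)
    (hsum : Mz = ∑ i, (h i)^2) : ∀ i, (h i).totalDegree ≤ 3 := by
  by_contra hcon
  push_neg at hcon
  obtain ⟨i₀, hi₀⟩ := hcon
  have hne : (Finset.univ : Finset (Fin r)).Nonempty := ⟨i₀, Finset.mem_univ _⟩
  set d := Finset.univ.sup (fun i => (h i).totalDegree) with hd
  have hdle : ∀ i, (h i).totalDegree ≤ d := fun i => by
    rw [hd]; exact Finset.le_sup (f := fun i => (h i).totalDegree) (Finset.mem_univ i)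
  have hd4 : 4 ≤ d := le_trans hi₀ (hdle i₀)
  obtain ⟨i₁, -, hi₁⟩ := Finset.exists_mem_eq_sup Finset.univ hne
    (fun i => (h i).totalDegree)
  set q := fun i => homogeneousComponent d (h i) with hq
  have hqzero : ∑ i, (q i) * (q i) = 0 := by
    apply MvPolynomial.ext
    intro m
    rw [coeff_sum, coeff_zero]
    rcases eq_or_ne m.degree (d + d) with hmd | hmd
    · have hcoeff : ∀ i, coeff m (q i * q i) = coeff m (h i * h i) := by
        intro i
        rw [coeff_mul, coeff_mul]
        apply Finset.sum_congr rfl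
        intro x hx
        rw [Finset.HasAntidiagonal.mem_antidiagonal] at hx
        have hxadd : x.1.degree + x.2.degree = d + d := by
          rw [← hmd, ← hx, deg3, deg3, deg3]
          simp only [Finsupp.add_apply]
          ring
        rcases lt_trichotomy x.1.degree d with h1 | h1 | h1
        · have h2 : d < x.2.degree := by omega
          have z1 : coeff x.2 (h i) = 0 :=
            coeff_eq_zero_of_totalDegree_lt (lt_of_le_of_lt (hdle i) h2)
          have z2 : coeff x.2 (q i) = 0 := by
            rw [hq, coeff_homogeneousComponent, if_neg (by omega)]
          rw [z1, z2, mul_zero, mul_zero]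
        · have h2 : x.2.degree = d := by omega
          rw [hq, coeff_homogeneousComponent, coeff_homogeneousComponent,
            if_pos h1, if_pos h2]
        · have z1 : coeff x.1 (h i) = 0 :=
            coeff_eq_zero_of_totalDegree_lt (lt_of_le_of_lt (hdle i) h1)
          have z2 : coeff x.1 (q i) = 0 := by
            rw [hq, coeff_homogeneousComponent, if_neg (by omega)]
          rw [z1, z2, zero_mul, zero_mul]
      rw [Finset.sum_congr rfl (fun i _ => hcoeff i)]
      have : ∑ i, coeff m (h i * h i) = coeff m Mz := by
        rw [hsum, coeff_sum]
        exact Finset.sum_congr rfl (fun i _ => by rw [sq])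
      rw [this]
      apply coeff_eq_zero_of_totalDegree_lt
      apply lt_of_le_of_lt totalDegree_Mz
      show 6 < m.degree
      omega
    · apply Finset.sum_eq_zero
      intro i _
      exact ((homogeneousComponent_isHomogeneous d (h i)).mul
        (homogeneousComponent_isHomogeneous d (h i))).coeff_eq_zero hmd
  have hq1 : q i₁ = 0 := sos_zero q hqzero i₁
  have hne1 : h i₁ ≠ 0 := by
    intro h0
    rw [h0, totalDegree_zero] at hi₁
    omega
  obtain ⟨m, hm, hmd⟩ := Finset.exists_mem_eq_sup (h i₁).support
    (Finset.nonempty_of_ne_empty (mt MvPolynomial.support_eq_empty.mp hne1)) (fun s => s.sum fun _ e => e)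
  have hmdeg : m.degree = d := by
    rw [hd, hi₁]
    exact hmd.symm
  have : coeff m (q i₁) = coeff m (h i₁) := by
    rw [hq, coeff_homogeneousComponent, if_pos hmdeg]
  rw [hq1, coeff_zero] at this
  exact (MvPolynomial.mem_support_iff.mp hm) this.symm

lemma real_sos {n : ℕ} (f : Fin n → ℝ) (hsum : ∑ i, (f i)^2 = 0) : ∀ i, f i = 0 := by
  intro i
  have h3 : ∀ j ∈ Finset.univ, (0:ℝ) ≤ (f j)^2 := fun j _ => sq_nonneg _
  have := (Finset.sum_eq_zero_iff_of_nonneg h3).mp hsum i (Finset.mem_univ i)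
  exact pow_eq_zero_iff (n := 2) (by norm_num) |>.mp this

theorem stmt_5 :
    ¬ ∃ (r : ℕ) (h : Fin r → MvPolynomial (Fin 3) ℝ),
      (X 0)^6 + (X 1)^4*(X 2)^2 + (X 1)^2*(X 2)^4 - 3*(X 0)^2*(X 1)^2*(X 2)^2
        = ∑ i, (h i)^2 := by
  rintro ⟨r, h, hsum⟩
  have hsum' : Mz = ∑ i, (h i) * (h i) := by
    rw [show (∑ i, (h i) * (h i)) = ∑ i, (h i)^2 from Finset.sum_congr rfl
      (fun i _ => (sq (h i)).symm)]
    exact hsum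
  have hdeg : ∀ i, (h i).totalDegree ≤ 3 := deg_le h hsum
  set c : Fin r → ℕ → ℕ → ℕ → ℝ := fun i a b c => coeff (E a b c) (h i) with hc
  have key : ∀ a b c : ℕ, coeff (E a b c) Mz = ∑ i, coeff (E a b c) ((h i) * (h i)) := by
    intro a b c
    rw [hsum', coeff_sum]
  -- step 1 : c i 0 3 0 = 0
  have s1 : ∀ i, c i 0 3 0 = 0 := by
    apply real_sos
    have := key 0 6 0
    rw [cMz_060] at this
    rw [← this.symm]
    exact Finset.sum_congr rfl (fun i _ => (coeff_sq_060 (h i) (hdeg i)).symm)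
  have s2 : ∀ i, c i 1 2 0 = 0 := by
    apply real_sos
    have := key 2 4 0
    rw [cMz_240] at this
    rw [Finset.sum_congr rfl (fun i _ => coeff_sq_240 (h i) (hdeg i))] at this
    rw [← this.symm]
    apply Finset.sum_congr rfl
    intro i _
    rw [show coeff (E 0 3 0) (h i) = c i 0 3 0 from rfl, s1 i]
    ring
  have s3 : ∀ i, c i 2 1 0 = 0 := by
    apply real_sos
    have := key 4 2 0
    rw [cMz_420] at this
    rw [Finset.sum_congr rfl (fun i _ => coeff_sq_420 (h i) (hdeg i))] at this
    rw [← this.symm]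
    apply Finset.sum_congr rfl
    intro i _
    rw [show coeff (E 1 2 0) (h i) = c i 1 2 0 from rfl, s2 i]
    ring
  have s4 : ∀ i, c i 0 0 3 = 0 := by
    apply real_sos
    have := key 0 0 6
    rw [cMz_006] at this
    rw [← this.symm]
    exact Finset.sum_congr rfl (fun i _ => (coeff_sq_006 (h i) (hdeg i)).symm)
  have s5 : ∀ i, c i 1 0 2 = 0 := by
    apply real_sos
    have := key 2 0 4
    rw [cMz_204] at this
    rw [Finset.sum_congr rfl (fun i _ => coeff_sq_204 (h i) (hdeg i))] at this
    rw [← this.symm]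
    apply Finset.sum_congr rfl
    intro i _
    rw [show coeff (E 0 0 3) (h i) = c i 0 0 3 from rfl, s4 i]
    ring
  have s6 : ∀ i, c i 2 0 1 = 0 := by
    apply real_sos
    have := key 4 0 2
    rw [cMz_402] at this
    rw [Finset.sum_congr rfl (fun i _ => coeff_sq_402 (h i) (hdeg i))] at this
    rw [← this.symm]
    apply Finset.sum_congr rfl
    intro i _
    rw [show coeff (E 1 0 2) (h i) = c i 1 0 2 from rfl, s5 i]
    ring
  -- final contradiction
  have final : (-3 : ℝ) = ∑ i, (c i 1 1 1)^2 := by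
    have := key 2 2 2
    rw [cMz_222] at this
    rw [Finset.sum_congr rfl (fun i _ => coeff_sq_222 (h i) (hdeg i))] at this
    rw [this]
    apply Finset.sum_congr rfl
    intro i _
    rw [show coeff (E 2 1 0) (h i) = c i 2 1 0 from rfl, s3 i,
      show coeff (E 2 0 1) (h i) = c i 2 0 1 from rfl, s6 i,
      show coeff (E 1 2 0) (h i) = c i 1 2 0 from rfl, s2 i]
    ring
  have : (0:ℝ) ≤ ∑ i, (c i 1 1 1)^2 := Finset.sum_nonneg (fun i _ => sq_nonneg _)
  linarith [final]
end

section
/- Every univariate real polynomial that is nonnegative on all of ℝ can be written as a sum of two squares of real polynomials. -/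
open Polynomial

private lemma key : ∀ n (p : Polynomial ℝ), p.natDegree ≤ n → (∀ t : ℝ, 0 ≤ p.eval t) →
    ∃ a b : Polynomial ℝ, p = a^2 + b^2 := by
  intro n
  induction n using Nat.strong_induction_on with
  | _ n ih =>
    intro p hdeg hp
    by_cases hp0 : p = 0
    · exact ⟨0, 0, by simp [hp0]⟩
    by_cases hd0 : p.natDegree = 0
    · -- constant polynomial
      obtain ⟨c, rfl⟩ : ∃ c, p = C c := ⟨p.coeff 0, (eq_C_of_natDegree_eq_zero hd0)⟩
      have hc : 0 ≤ c := by simpa using hp 0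
      refine ⟨C (Real.sqrt c), 0, ?_⟩
      rw [← C_pow, Real.sq_sqrt hc]; ring
    -- p nonconstant
    have hn1 : 1 ≤ p.natDegree := Nat.one_le_iff_ne_zero.mpr hd0
    by_cases hroot : ∃ r : ℝ, p.eval r = 0
    · -- real root case
      obtain ⟨r, hr⟩ := hroot
      set m := p.rootMultiplicity r with hm
      obtain ⟨q, hpq, hndvd⟩ := p.exists_eq_pow_rootMultiplicity_mul_and_not_dvd hp0 r
      rw [← hm] at hpq
      have hm1 : 1 ≤ m := (rootMultiplicity_pos hp0).mpr hr
      have hqr : q.eval r ≠ 0 := by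
        intro h
        exact hndvd (dvd_iff_isRoot.mpr h)
      -- sign of q on each side of r
      have hq_pos : ∀ t > r, 0 ≤ q.eval t := by
        intro t ht
        have h1 : 0 ≤ (t - r) ^ m * q.eval t := by
          have := hp t
          rw [hpq] at this
          simpa using this
        have h2 : 0 < (t - r) ^ m := pow_pos (by linarith) m
        nlinarith
      have hqr_pos : 0 < q.eval r := by
        rcases lt_or_gt_of_ne hqr with h | h
        · exfalso
          -- q.eval continuous, q.eval t ≥ 0 for t > r, so q.eval r ≥ 0
          have hcont : Filter.Tendsto (fun t => q.eval t) (nhdsWithin r (Set.Ioi r))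
              (nhds (q.eval r)) := (q.continuous.tendsto r).mono_left nhdsWithin_le_nhds
          have : 0 ≤ q.eval r := by
            refine ge_of_tendsto hcont ?_
            filter_upwards [self_mem_nhdsWithin] with t ht
            exact hq_pos t ht
          linarith
        · exact h
      -- m is even
      have hmeven : Even m := by
        by_contra hodd
        rw [Nat.not_even_iff_odd] at hodd
        have hq_neg : ∀ t < r, q.eval t ≤ 0 := by
          intro t ht
          have h1 : 0 ≤ (t - r) ^ m * q.eval t := by
            have := hp t
            rw [hpq] at this
            simpa using this
          have h2 : (t - r) ^ m < 0 := hodd.pow_neg (by linarith)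
          nlinarith
        have hcont : Filter.Tendsto (fun t => q.eval t) (nhdsWithin r (Set.Iio r))
            (nhds (q.eval r)) := (q.continuous.tendsto r).mono_left nhdsWithin_le_nhds
        have : q.eval r ≤ 0 := by
          refine le_of_tendsto hcont ?_
          filter_upwards [self_mem_nhdsWithin] with t ht
          exact hq_neg t ht
        linarith
      -- q is nonneg everywhere
      have hqnn : ∀ t : ℝ, 0 ≤ q.eval t := by
        intro t
        rcases lt_trichotomy t r with h | h | h
        · by_contra hneg
          push_neg at hneg
          have h1 : 0 ≤ (t - r) ^ m * q.eval t := by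
            have := hp t
            rw [hpq] at this
            simpa using this
          have h2 : 0 < (t - r) ^ m := hmeven.pow_pos (by linarith)
          nlinarith
        · subst h; linarith
        · exact hq_pos t h
      -- degree of q is smaller
      have hq0 : q ≠ 0 := fun h => hqr (by simp [h])
      have hdq : q.natDegree < n := by
        have hXr : ((X - C r : Polynomial ℝ) ^ m) ≠ 0 := pow_ne_zero _ (X_sub_C_ne_zero r)
        have := natDegree_mul hXr hq0
        rw [← hpq] at this
        have hxm : ((X - C r : Polynomial ℝ) ^ m).natDegree = m := by
          simp [natDegree_pow]
        omega
      obtain ⟨a, b, hab⟩ := ih q.natDegree hdq q le_rfl hqnn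
      obtain ⟨k, hk⟩ := hmeven
      refine ⟨(X - C r) ^ k * a, (X - C r) ^ k * b, ?_⟩
      rw [hpq, hab, hk]
      ring
    · -- no real root: use complex root
      push_neg at hroot
      set P := p.map (algebraMap ℝ ℂ) with hP
      have hP0 : P ≠ 0 := by
        simp only [hP, Ne, Polynomial.map_eq_zero_iff (algebraMap ℝ ℂ).injective]
        exact hp0
      have hPdeg : 0 < P.degree := by
        rw [hP, degree_map_eq_of_injective (algebraMap ℝ ℂ).injective]
        exact natDegree_pos_iff_degree_pos.mp hn1
      obtain ⟨z, hz⟩ := Complex.exists_root hPdeg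
      have hzroot : P.eval z = 0 := hz
      -- conjugate is also a root
      have hconj : P.eval ((starRingEnd ℂ) z) = 0 := by
        have h1 : P.eval ((starRingEnd ℂ) z) = p.eval₂ (algebraMap ℝ ℂ) ((starRingEnd ℂ) z) := by
          rw [hP, eval_map]
        have h2 : (starRingEnd ℂ) (P.eval z) =
            p.eval₂ ((starRingEnd ℂ).comp (algebraMap ℝ ℂ)) ((starRingEnd ℂ) z) := by
          rw [hP, eval_map, hom_eval₂]
        have h3 : (starRingEnd ℂ).comp (algebraMap ℝ ℂ) = algebraMap ℝ ℂ := by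
          ext x
          simp [Complex.conj_ofReal]
        rw [h3] at h2
        rw [h1, ← h2, hzroot, map_zero]
      have him : z.im ≠ 0 := by
        intro h0
        have : p.eval z.re = 0 := by
          have : P.eval (algebraMap ℝ ℂ z.re) = algebraMap ℝ ℂ (p.eval z.re) := by
            rw [hP, eval_map, eval₂_at_apply]
          rw [show (algebraMap ℝ ℂ z.re : ℂ) = z by
            apply Complex.ext <;> simp [h0], hzroot] at this
          exact_mod_cast ((algebraMap ℝ ℂ).injective (by simpa using this.symm))
        exact hroot z.re this
      -- the real quadratic factor
      set q : Polynomial ℝ := (X - C z.re) ^ 2 + C z.im ^ 2 with hq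
      have hqmap : q.map (algebraMap ℝ ℂ) = (X - C z) * (X - C ((starRingEnd ℂ) z)) := by
        have h1 : (z : ℂ) + (starRingEnd ℂ) z = 2 * (z.re : ℂ) := by
          rw [Complex.add_conj]; push_cast; ring
        have h2 : z * (starRingEnd ℂ) z = (z.re : ℂ) ^ 2 + (z.im : ℂ) ^ 2 := by
          rw [Complex.mul_conj]
          simp [Complex.normSq_apply]
          ring
        have hc1 : C ((z : ℂ) + (starRingEnd ℂ) z) = C (2 * (z.re : ℂ)) := congrArg C h1
        have hc2 : C (z * (starRingEnd ℂ) z) = C ((z.re : ℂ) ^ 2 + (z.im : ℂ) ^ 2) :=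
          congrArg C h2
        simp only [map_add, map_mul, map_pow, map_ofNat] at hc1 hc2
        rw [hq]
        simp only [Polynomial.map_add, Polynomial.map_pow, Polynomial.map_sub,
          Polynomial.map_mul, map_X, map_C, Complex.coe_algebraMap]
        linear_combination (X : Polynomial ℂ) * hc1 - hc2
      have hdvd : q ∣ p := by
        rw [← map_dvd_map' (algebraMap ℝ ℂ), hqmap]
        refine IsCoprime.mul_dvd ?_ (dvd_iff_isRoot.mpr hzroot) (dvd_iff_isRoot.mpr hconj)
        apply isCoprime_X_sub_C_of_isUnit_sub
        refine (sub_ne_zero_of_ne ?_).isUnit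
        intro h
        apply him
        have := congrArg Complex.im h
        simp [Complex.conj_im] at this
        linarith [this]
      obtain ⟨s, hs⟩ := hdvd
      have hqpos : ∀ t : ℝ, 0 < q.eval t := by
        intro t
        rw [hq]
        simp only [eval_add, eval_pow, eval_sub, eval_X, eval_C]
        have : 0 < z.im ^ 2 := by positivity
        nlinarith [sq_nonneg (t - z.re)]
      have hsnn : ∀ t : ℝ, 0 ≤ s.eval t := by
        intro t
        have h1 := hp t
        rw [hs, eval_mul] at h1
        nlinarith [hqpos t]
      have hs0 : s ≠ 0 := by
        intro h; rw [h, mul_zero] at hs; exact hp0 hs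
      have hq0 : q ≠ 0 := fun h => absurd (hqpos 0) (by simp [h])
      have hqdeg : q.natDegree = 2 := by
        rw [hq]
        compute_degree!
      have hds : s.natDegree < n := by
        have := natDegree_mul hq0 hs0
        rw [← hs, hqdeg] at this
        omega
      obtain ⟨a, b, hab⟩ := ih s.natDegree hds s le_rfl hsnn
      refine ⟨(X - C z.re) * a + C z.im * b, (X - C z.re) * b - C z.im * a, ?_⟩
      rw [hs, hab, hq]
      ring

theorem stmt_7 (p : Polynomial ℝ) (hp : ∀ t : ℝ, 0 ≤ p.eval t) :
    ∃ a b : Polynomial ℝ, p = a^2 + b^2 :=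
  key p.natDegree p le_rfl hp
end

section
/- Every homogeneous real polynomial in two variables of even degree that is nonnegative on ℝ² is a sum of two squares of homogeneous polynomials of half the degree. -/
open Polynomial in

lemma univ_sos : ∀ (k : ℕ) (p : ℝ[X]), p.natDegree = k → (∀ x : ℝ, 0 ≤ p.eval x) →
    ∃ q r : ℝ[X], p = q ^ 2 + r ^ 2 := by
  intro k
  induction k using Nat.strong_induction_on with
  | _ k ih =>
  intro p hk hp
  by_cases hp0 : p = 0
  · exact ⟨0, 0, by simp [hp0]⟩
  by_cases hd0 : p.natDegree = 0
  · have hCc := Polynomial.eq_C_of_natDegree_eq_zero hd0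
    have hc : 0 ≤ p.coeff 0 := by
      have := hp 0; rw [hCc] at this; simpa using this
    refine ⟨C (Real.sqrt (p.coeff 0)), 0, ?_⟩
    conv_lhs => rw [hCc]
    rw [← map_pow, Real.sq_sqrt hc]; ring
  -- degree ≥ 1 : find a complex root
  have hmapne : 0 < (p.map (algebraMap ℝ ℂ)).degree := by
    rw [Polynomial.degree_map]
    exact Polynomial.natDegree_pos_iff_degree_pos.1 (Nat.pos_of_ne_zero hd0)
  obtain ⟨z, hz⟩ := Complex.exists_root hmapne
  by_cases him : z.im = 0
  · -- real root x₀ := z.re, double root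
    set x₀ := z.re with hx₀
    have hroot : p.eval x₀ = 0 := by
      have h1 : (algebraMap ℝ ℂ) (p.eval x₀) = 0 := by
        rw [← Polynomial.eval₂_at_apply, ← Polynomial.eval_map]
        have h2 : (algebraMap ℝ ℂ) x₀ = z := by
          apply Complex.ext <;> simp [him, hx₀]
        rw [h2]
        exact hz
      exact (map_eq_zero_iff _ (algebraMap ℝ ℂ).injective).1 h1
    obtain ⟨p₁, hp₁⟩ := (Polynomial.dvd_iff_isRoot.2 hroot)
    have hp₁root : p₁.eval x₀ = 0 := by
      have hmin : IsLocalMin (fun x => p.eval x) x₀ :=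
        Filter.Eventually.of_forall (fun x => by simpa [hroot] using hp x)
      have hder : p.derivative.eval x₀ = 0 := by
        rw [← Polynomial.deriv]; exact hmin.deriv_eq_zero
      rw [hp₁] at hder
      simpa using hder
    obtain ⟨p₂, hp₂⟩ := (Polynomial.dvd_iff_isRoot.2 hp₁root)
    have hpfac : p = (X - C x₀) ^ 2 * p₂ := by rw [hp₁, hp₂]; ring
    have hp₂ne : p₂ ≠ 0 := by rintro rfl; exact hp0 (by simp [hpfac])
    have hXne : ((X - C x₀ : ℝ[X]) ^ 2) ≠ 0 := pow_ne_zero _ (X_sub_C_ne_zero x₀)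
    have hdeg : p.natDegree = 2 + p₂.natDegree := by
      rw [hpfac, Polynomial.natDegree_mul hXne hp₂ne, Polynomial.natDegree_pow,
        Polynomial.natDegree_X_sub_C]
    have hne : ∀ x : ℝ, x ≠ x₀ → 0 ≤ p₂.eval x := by
      intro x hx
      have h1 := hp x
      rw [hpfac] at h1
      simp only [Polynomial.eval_mul, Polynomial.eval_pow, Polynomial.eval_sub,
        Polynomial.eval_X, Polynomial.eval_C] at h1
      nlinarith [sq_pos_of_ne_zero (sub_ne_zero.2 hx)]
    have hat : 0 ≤ p₂.eval x₀ := by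
      by_contra hneg
      push_neg at hneg
      have hc : Filter.Tendsto (fun y => p₂.eval y) (nhds x₀) (nhds (p₂.eval x₀)) :=
        (p₂.continuous).continuousAt
      have hev : ∀ᶠ y in nhdsWithin x₀ {x₀}ᶜ, p₂.eval y < 0 :=
        (hc.eventually_lt_const hneg).filter_mono nhdsWithin_le_nhds
      obtain ⟨y, hy1, hy2⟩ := (hev.and self_mem_nhdsWithin).exists
      exact absurd (hne y hy2) (not_le.2 hy1)
    have hnn₂ : ∀ x : ℝ, 0 ≤ p₂.eval x := by
      intro x
      rcases eq_or_ne x x₀ with h | h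
      · rw [h]; exact hat
      · exact hne x h
    obtain ⟨q, r, hqr⟩ := ih p₂.natDegree (by omega) p₂ rfl hnn₂
    exact ⟨(X - C x₀) * q, (X - C x₀) * r, by rw [hpfac, hqr]; ring⟩
  · -- complex root, quadratic factor m
    set m : ℝ[X] := (X - C z.re) ^ 2 + C (z.im ^ 2) with hm
    have hdX2 : ((X - C z.re : ℝ[X]) ^ 2).degree = 2 := by
      rw [Polynomial.degree_pow, Polynomial.degree_X_sub_C]; rfl
    have hltC : (C (z.im ^ 2) : ℝ[X]).degree < ((X - C z.re : ℝ[X]) ^ 2).degree := by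
      apply lt_of_le_of_lt Polynomial.degree_C_le
      rw [hdX2]; decide
    have hmonic : m.Monic := Polynomial.Monic.add_of_left ((monic_X_sub_C z.re).pow 2) hltC
    have hmmap : m.map (algebraMap ℝ ℂ) = (X - C z) * (X - C (starRingEnd ℂ z)) := by
      have h1 : (X - C z) * (X - C (starRingEnd ℂ z)) =
          X ^ 2 - C (z + starRingEnd ℂ z) * X + C (z * starRingEnd ℂ z) := by
        simp only [map_add, map_mul]; ring
      rw [h1, Complex.add_conj, Complex.mul_conj]
      simp only [hm, Polynomial.map_add, Polynomial.map_pow, Polynomial.map_sub,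
        Polynomial.map_X, Polynomial.map_C]
      have h2 : (algebraMap ℝ ℂ) z.re = (z.re : ℂ) := rfl
      have h3 : (algebraMap ℝ ℂ) (z.im ^ 2) = ((z.im : ℂ)) ^ 2 := by push_cast; rfl
      rw [h2, h3]
      have h4 : ((Complex.normSq z : ℝ) : ℂ) = (z.re : ℂ) ^ 2 + (z.im : ℂ) ^ 2 := by
        rw [Complex.normSq_apply]; push_cast; ring
      rw [h4]
      simp only [Polynomial.C_add, Polynomial.C_mul, Polynomial.C_pow, Complex.ofReal_mul,
        Complex.ofReal_pow, Complex.ofReal_ofNat, map_ofNat]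
      ring
    have haev : ∀ w : ℂ, (Polynomial.aeval w) p = (p.map (algebraMap ℝ ℂ)).eval w := fun w => by
      rw [Polynomial.aeval_def, Polynomial.eval_map]
    have hdvd : m ∣ p := by
      rw [← Polynomial.map_dvd_map (algebraMap ℝ ℂ) (algebraMap ℝ ℂ).injective hmonic, hmmap]
      have hz1 : (X - C z) ∣ p.map (algebraMap ℝ ℂ) := Polynomial.dvd_iff_isRoot.2 hz
      have hz2 : (X - C (starRingEnd ℂ z)) ∣ p.map (algebraMap ℝ ℂ) := by
        apply Polynomial.dvd_iff_isRoot.2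
        have hconj : (p.map (algebraMap ℝ ℂ)).eval (starRingEnd ℂ z) =
            starRingEnd ℂ ((p.map (algebraMap ℝ ℂ)).eval z) := by
          rw [← haev, ← haev]
          have := Polynomial.aeval_algHom_apply (Complex.conjAe) z p
          simpa [Complex.conjAe_coe] using this
        rw [Polynomial.IsRoot, hconj, hz, map_zero]
      have hne' : starRingEnd ℂ z - z ≠ 0 := by
        rw [sub_ne_zero]
        intro h
        exact him ((Complex.conj_eq_iff_im).1 h)
      have hcop : IsCoprime (X - C z) (X - C (starRingEnd ℂ z)) := by
        refine ⟨C ((starRingEnd ℂ z - z)⁻¹), -C ((starRingEnd ℂ z - z)⁻¹), ?_⟩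
        calc C ((starRingEnd ℂ z - z)⁻¹) * (X - C z) +
              -C ((starRingEnd ℂ z - z)⁻¹) * (X - C (starRingEnd ℂ z))
            = C ((starRingEnd ℂ z - z)⁻¹) * (C (starRingEnd ℂ z) - C z) := by ring
          _ = C ((starRingEnd ℂ z - z)⁻¹ * (starRingEnd ℂ z - z)) := by
              rw [← Polynomial.C_sub, ← Polynomial.C_mul]
          _ = 1 := by rw [inv_mul_cancel₀ hne', Polynomial.C_1]
      exact hcop.mul_dvd hz1 hz2
    obtain ⟨p₁, hp₁⟩ := hdvd
    have hmpos : ∀ x : ℝ, 0 < m.eval x := by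
      intro x
      simp only [hm, Polynomial.eval_add, Polynomial.eval_pow, Polynomial.eval_sub,
        Polynomial.eval_X, Polynomial.eval_C]
      nlinarith [sq_nonneg (x - z.re), sq_pos_of_ne_zero him]
    have hp₁ne : p₁ ≠ 0 := by rintro rfl; exact hp0 (by simp [hp₁])
    have hdeg : p.natDegree = 2 + p₁.natDegree := by
      rw [hp₁, Polynomial.natDegree_mul (hmonic.ne_zero) hp₁ne]
      congr 1
      have hmd : m.degree = 2 := by
        rw [hm, Polynomial.degree_add_eq_left_of_degree_lt hltC, hdX2]
      exact Polynomial.natDegree_eq_of_degree_eq_some hmd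
    have hnn₁ : ∀ x : ℝ, 0 ≤ p₁.eval x := by
      intro x
      have h1 := hp x
      rw [hp₁] at h1
      simp only [Polynomial.eval_mul] at h1
      nlinarith [hmpos x]
    obtain ⟨q, r, hqr⟩ := ih p₁.natDegree (by omega) p₁ rfl hnn₁
    refine ⟨(X - C z.re) * q - C z.im * r, (X - C z.re) * r + C z.im * q, ?_⟩
    have him2 : (C (z.im ^ 2) : ℝ[X]) = (C z.im) ^ 2 := by rw [map_pow]
    rw [hp₁, hqr, hm, him2]
    ring

open MvPolynomial


lemma isHomog_deg {N : ℕ} {e : MvPolynomial (Fin 2) ℝ} (he : e.IsHomogeneous N)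
    {m : Fin 2 →₀ ℕ} (h : coeff m e ≠ 0) : m.degree = N := by
  rw [Finsupp.degree_eq_weight_one]; exact he h

lemma fin2_degree (m : Fin 2 →₀ ℕ) : m.degree = m 0 + m 1 := by
  rw [Finsupp.degree_apply]
  rw [Finset.sum_subset (Finset.subset_univ m.support)
    (by intro i _ hi; simpa using Finsupp.notMem_support_iff.1 hi)]
  exact Fin.sum_univ_two m

noncomputable def dehom (e : MvPolynomial (Fin 2) ℝ) : Polynomial ℝ :=
  MvPolynomial.aeval ![Polynomial.X, 1] e

lemma dehom_monomial (m : Fin 2 →₀ ℕ) (c : ℝ) :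
    dehom (monomial m c) = Polynomial.C c * Polynomial.X ^ (m 0) := by
  rw [dehom, MvPolynomial.aeval_monomial]
  rw [Finsupp.prod_fintype _ _ (fun i => pow_zero _)]
  rw [Fin.prod_univ_two]
  simp [Algebra.algebraMap_self_apply]

lemma dehom_eval (e : MvPolynomial (Fin 2) ℝ) (t : ℝ) :
    (dehom e).eval t = eval ![t, 1] e := by
  have h := congrFun (congrArg (fun φ => φ.toFun)
    (MvPolynomial.comp_aeval (f := ![Polynomial.X, (1 : Polynomial ℝ)])
      (Polynomial.aeval t : Polynomial ℝ →ₐ[ℝ] ℝ))) e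
  simp only [AlgHom.toFun_eq_coe, AlgHom.coe_comp, Function.comp_apply] at h
  rw [dehom]
  have h2 : (Polynomial.aeval t : Polynomial ℝ →ₐ[ℝ] ℝ) (MvPolynomial.aeval ![Polynomial.X, 1] e)
      = (MvPolynomial.aeval ![Polynomial.X, 1] e).eval t := by
    rw [Polynomial.aeval_def]; rfl
  rw [← h2, h]
  have h3 : (fun i => (Polynomial.aeval t : Polynomial ℝ →ₐ[ℝ] ℝ) (![Polynomial.X, 1] i)) = ![t, 1] := by
    funext i
    fin_cases i <;> simp
  rw [h3, MvPolynomial.aeval_def, MvPolynomial.eval]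
  rfl


lemma dehom_natDegree_le {N : ℕ} {e : MvPolynomial (Fin 2) ℝ} (he : e.IsHomogeneous N) :
    (dehom e).natDegree ≤ N := by
  conv_lhs => rw [e.as_sum]
  rw [dehom, map_sum]
  apply Polynomial.natDegree_sum_le_of_forall_le
  intro m hm
  rw [← dehom, dehom_monomial]
  apply le_trans (Polynomial.natDegree_C_mul_le _ _)
  rw [Polynomial.natDegree_X_pow]
  calc m 0 ≤ m.degree := Finsupp.le_degree 0 m
    _ = N := isHomog_deg he (mem_support_iff.1 hm)

lemma dehom_inj {N : ℕ} {e : MvPolynomial (Fin 2) ℝ} (he : e.IsHomogeneous N)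
    (h0 : dehom e = 0) : e = 0 := by
  ext m
  rw [coeff_zero]
  by_contra hc
  have hmem : m ∈ e.support := mem_support_iff.2 hc
  have hdm : m.degree = N := isHomog_deg he hc
  have key : (dehom e).coeff (m 0) = coeff m e := by
    conv_lhs => rw [e.as_sum, dehom, map_sum]
    rw [Polynomial.finset_sum_coeff]
    rw [Finset.sum_eq_single m]
    · rw [← dehom, dehom_monomial]
      simp
    · intro m' hm' hne
      rw [← dehom, dehom_monomial]
      simp only [Polynomial.coeff_C_mul, Polynomial.coeff_X_pow]
      have : m' 0 ≠ m 0 := by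
        intro h
        apply hne
        have hdm' : m'.degree = N := isHomog_deg he (mem_support_iff.1 hm')
        rw [fin2_degree] at hdm hdm'
        have h1 : m' 1 = m 1 := by omega
        ext i
        fin_cases i
        · exact h
        · exact h1
      rw [if_neg (fun h => this h.symm), mul_zero]
    · intro h
      exact absurd hmem h
  rw [h0] at key
  simp at key
  exact hc key.symm

noncomputable def homz (N : ℕ) (q : Polynomial ℝ) : MvPolynomial (Fin 2) ℝ :=
  ∑ i ∈ Finset.range (N + 1),
    monomial (Finsupp.single 0 i + Finsupp.single 1 (N - i)) (q.coeff i)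

lemma homz_isHomogeneous (N : ℕ) (q : Polynomial ℝ) : (homz N q).IsHomogeneous N := by
  apply IsHomogeneous.sum
  intro i hi
  apply isHomogeneous_monomial
  rw [Finset.mem_range] at hi
  rw [fin2_degree]
  simp [Finsupp.single_apply, Fin.ext_iff]
  omega

lemma dehom_homz {N : ℕ} {q : Polynomial ℝ} (hq : q.natDegree ≤ N) : dehom (homz N q) = q := by
  rw [homz, dehom, map_sum]
  conv_rhs => rw [q.as_sum_range' (N + 1) (by omega)]
  apply Finset.sum_congr rfl
  intro i hi
  rw [← dehom, dehom_monomial]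
  simp only [Finsupp.add_apply, Finsupp.single_apply]
  norm_num
  rw [Polynomial.C_mul_X_pow_eq_monomial]

lemma sos_deg_le {q r : Polynomial ℝ} {N : ℕ} (h : (q ^ 2 + r ^ 2).natDegree ≤ 2 * N) :
    q.natDegree ≤ N ∧ r.natDegree ≤ N := by
  set n := max q.natDegree r.natDegree with hn
  rcases le_or_gt n N with h1 | h1
  · exact ⟨le_trans (le_max_left _ _) h1, le_trans (le_max_right _ _) h1⟩
  exfalso
  have hq2 : (q ^ 2).coeff (2 * n) = (q.coeff n) ^ 2 := by
    rw [two_mul, sq, Polynomial.coeff_mul_add_eq_of_natDegree_le (le_max_left _ _) (le_max_left _ _), sq]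
  have hr2 : (r ^ 2).coeff (2 * n) = (r.coeff n) ^ 2 := by
    rw [two_mul, sq, Polynomial.coeff_mul_add_eq_of_natDegree_le (le_max_right _ _) (le_max_right _ _), sq]
  have h0 : (q ^ 2 + r ^ 2).coeff (2 * n) = 0 :=
    Polynomial.coeff_eq_zero_of_natDegree_lt (lt_of_le_of_lt h (by omega))
  rw [Polynomial.coeff_add, hq2, hr2] at h0
  have hq0 : q.coeff n = 0 := by nlinarith [sq_nonneg (q.coeff n), sq_nonneg (r.coeff n)]
  have hr0 : r.coeff n = 0 := by nlinarith [sq_nonneg (q.coeff n), sq_nonneg (r.coeff n)]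
  rcases max_cases q.natDegree r.natDegree with ⟨he, hle⟩ | ⟨he, hle⟩
  · have hq : q = 0 := Polynomial.leadingCoeff_eq_zero.1 (by rwa [Polynomial.leadingCoeff, ← he])
    rw [hq, Polynomial.natDegree_zero] at hle
    rw [hq] at hn
    simp at hn
    omega
  · have hr : r = 0 := Polynomial.leadingCoeff_eq_zero.1 (by rwa [Polynomial.leadingCoeff, ← he])
    rw [hr, Polynomial.natDegree_zero] at hle
    rw [hr] at hn
    simp at hn
    omega
theorem stmt_8 (d : ℕ) (f : MvPolynomial (Fin 2) ℝ)
    (hf : f.IsHomogeneous (2*d))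
    (hnn : ∀ a b : ℝ, 0 ≤ eval ![a, b] f) :
    ∃ g h : MvPolynomial (Fin 2) ℝ,
      g.IsHomogeneous d ∧ h.IsHomogeneous d ∧ f = g^2 + h^2 := by
  have hpnn : ∀ x : ℝ, 0 ≤ (dehom f).eval x := fun x => by
    rw [dehom_eval]; exact hnn x 1
  have hpdeg : (dehom f).natDegree ≤ 2 * d := dehom_natDegree_le hf
  obtain ⟨q, r, hqr⟩ := univ_sos (dehom f).natDegree (dehom f) rfl hpnn
  have hb : q.natDegree ≤ d ∧ r.natDegree ≤ d := sos_deg_le (by rw [← hqr]; exact hpdeg)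
  refine ⟨homz d q, homz d r, homz_isHomogeneous d q, homz_isHomogeneous d r, ?_⟩
  have hE : (f - (homz d q ^ 2 + homz d r ^ 2)).IsHomogeneous (2 * d) := by
    apply hf.sub
    apply MvPolynomial.IsHomogeneous.add
    · exact mul_comm d 2 ▸ (homz_isHomogeneous d q).pow 2
    · exact mul_comm d 2 ▸ (homz_isHomogeneous d r).pow 2
  have hd0 : dehom (f - (homz d q ^ 2 + homz d r ^ 2)) = 0 := by
    have hmap : ∀ a b : MvPolynomial (Fin 2) ℝ, dehom (a - b) = dehom a - dehom b := fun a b => by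
      simp [dehom, map_sub]
    have hmap2 : ∀ a b : MvPolynomial (Fin 2) ℝ, dehom (a + b) = dehom a + dehom b := fun a b => by
      simp [dehom, map_add]
    have hmap3 : ∀ (a : MvPolynomial (Fin 2) ℝ) (n : ℕ), dehom (a ^ n) = dehom a ^ n := fun a n => by
      simp [dehom, map_pow]
    rw [hmap, hmap2, hmap3, hmap3, dehom_homz hb.1, dehom_homz hb.2, ← hqr, sub_self]
  have := dehom_inj hE hd0
  rw [sub_eq_zero] at this
  exact this
end

section
/- (S-Lemma, homogeneous version) Let p, q be real quadratic forms on ℝⁿ with q indefinite (taking both positive and negative values). If p(x) ≥ 0 for every x ∈ ℝⁿ with q(x) = 0, then there exists λ ∈ ℝ such that p + λq is positive semidefinite. -/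
lemma expand_aux (n : ℕ) (r : QuadraticForm ℝ (Fin n → ℝ)) (x y : Fin n → ℝ) (t : ℝ) :
    r (x + t • y) = r x + t * QuadraticMap.polar r x y + t^2 * r y := by
  have h1 : QuadraticMap.polar r x (t • y) = r (x + t • y) - r x - r (t • y) := rfl
  have h2 : r (t • y) = t * t * r y := QuadraticMap.map_smul r t y
  have h3 : QuadraticMap.polar r x (t • y) = t * QuadraticMap.polar r x y :=
    QuadraticMap.polar_smul_right r t x y
  nlinarith [h1, h2, h3]

lemma real_key (qx qy px py B P : ℝ) (hx : 0 < qx) (hy : qy < 0)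
    (hroot : ∀ t : ℝ, qx + t * B + t^2 * qy = 0 → 0 ≤ px + t * P + t^2 * py) :
    0 ≤ qx * py - qy * px := by
  have hqy : qy ≠ 0 := ne_of_lt hy
  have hdisc : 0 < B^2 - 4 * qx * qy := by nlinarith [sq_nonneg B]
  set d := Real.sqrt (B^2 - 4 * qx * qy) with hdd
  have hd2 : d^2 = B^2 - 4 * qx * qy := Real.sq_sqrt hdisc.le
  have hd0 : 0 < d := Real.sqrt_pos.2 hdisc
  set t₁ := (-B - d) / (2 * qy) with ht1
  set t₂ := (-B + d) / (2 * qy) with ht2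
  have hp1 : 0 ≤ px + t₁ * P + t₁^2 * py := by
    apply hroot; rw [ht1]; field_simp
    linear_combination hd2
  have hp2 : 0 ≤ px + t₂ * P + t₂^2 * py := by
    apply hroot; rw [ht2]; field_simp
    linear_combination hd2
  have hprod : t₁ * t₂ * qy = qx := by
    rw [ht1, ht2]; field_simp
    linear_combination (-1 : ℝ) * hd2
  have hpos : 0 < t₁ - t₂ := by
    have e : (t₁ - t₂) * (2 * qy) = -(2 * d) := by
      rw [ht1, ht2, div_sub_div_same, div_mul_cancel₀ _ (by intro hc; apply hqy; linarith)]
      ring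
    nlinarith [e, hd0, hy]
  have hneg : t₁ * t₂ < 0 := by nlinarith
  have ht2neg : t₂ < 0 := by nlinarith
  have ht1pos : 0 < t₁ := by nlinarith
  have comb : 0 ≤ (t₁ - t₂) * (px - t₁ * t₂ * py) := by
    nlinarith [mul_nonneg ht1pos.le hp2, mul_nonneg (neg_nonneg.2 ht2neg.le) hp1]
  have hthis : 0 ≤ px - t₁ * t₂ * py := nonneg_of_mul_nonneg_right (by linarith) hpos
  have h2 : 0 ≤ (-qy) * (px - t₁ * t₂ * py) := mul_nonneg (by linarith) hthis
  have hz : py * (t₁ * t₂ * qy - qx) = 0 := by rw [hprod]; ring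
  nlinarith [h2, hz]

lemma key_aux (n : ℕ) (p q : QuadraticForm ℝ (Fin n → ℝ))
    (h : ∀ x, q x = 0 → 0 ≤ p x) (x y : Fin n → ℝ)
    (hx : 0 < q x) (hy : q y < 0) : 0 ≤ q x * p y - q y * p x := by
  apply real_key (q x) (q y) (p x) (p y) (QuadraticMap.polar q x y)
    (QuadraticMap.polar p x y) hx hy
  intro t ht
  have hq0 : q (x + t • y) = 0 := by rw [expand_aux]; linarith
  have := h _ hq0
  rwa [expand_aux] at this

theorem stmt_15 (n : ℕ) (p q : QuadraticForm ℝ (Fin n → ℝ))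
    (hu : ∃ u, 0 < q u) (hv : ∃ v, q v < 0)
    (h : ∀ x, q x = 0 → 0 ≤ p x) :
    ∃ lam : ℝ, ∀ x, 0 ≤ p x + lam * q x := by
  obtain ⟨u, hu⟩ := hu
  obtain ⟨v, hv⟩ := hv
  set S : Set ℝ := (fun x => -(p x) / q x) '' {x | 0 < q x} with hS
  have hne : S.Nonempty := ⟨_, ⟨u, hu, rfl⟩⟩
  have hbdd : BddAbove S := by
    refine ⟨p v / (-(q v)), ?_⟩
    rintro s ⟨x, hx, rfl⟩
    rw [div_le_div_iff₀ hx (by linarith)]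
    nlinarith [key_aux n p q h x v hx hv]
  refine ⟨sSup S, fun x => ?_⟩
  rcases lt_trichotomy (q x) 0 with hx | hx | hx
  · have hub : sSup S ≤ p x / (-(q x)) := by
      apply csSup_le hne
      rintro s ⟨y, hy, rfl⟩
      rw [div_le_div_iff₀ hy (by linarith)]
      nlinarith [key_aux n p q h y x hy hx]
    rw [le_div_iff₀ (by linarith : (0:ℝ) < -(q x))] at hub
    nlinarith [hub]
  · have := h x hx
    rw [hx]; linarith
  · have hlb : -(p x) / q x ≤ sSup S := le_csSup hbdd ⟨x, hx, rfl⟩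
    rw [div_le_iff₀ hx] at hlb
    nlinarith [hlb]
end
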